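/- Let U ⊆ ℝ³ be open and let F = (F_ij)_{1≤i,j≤3} be a symmetric matrix field of smooth real-valued functions on U. Then for all i, j, inc(inc(F))_ij = ΔΔ F_ij + ∂_i∂_j∂_k∂_l F_kl − Δ(∂_j∂_k F_ik) − Δ(∂_i∂_k F_jk) on U, where Δ = ∂_m∂_m is the Laplacian and repeated indices are summed over {1,2,3}. -/

import Mathlib

open MeasureTheory Real

/-- Partial derivative in the `i`-th coordinate direction of a function on `ℝ³`. -/
noncomputable def pd3 (i : Fin 3) (f : EuclideanSpace ℝ (Fin 3) → ℝ) :
    EuclideanSpace ℝ (Fin 3) → ℝ :=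
  fun x => fderiv ℝ f x (EuclideanSpace.single i 1)

/-- The Levi-Civita symbol `ε_ijk` on `{0,1,2}`. -/
noncomputable def lc (i j k : Fin 3) : ℝ :=
  (((j : ℕ) : ℝ) - ((i : ℕ) : ℝ)) * (((k : ℕ) : ℝ) - ((j : ℕ) : ℝ))
    * (((k : ℕ) : ℝ) - ((i : ℕ) : ℝ)) / 2

/-- The incompatibility tensor `inc(F)_ij = ε_ikl ε_jmn ∂_k ∂_m F_ln`. -/
noncomputable def inc (F : Fin 3 → Fin 3 → EuclideanSpace ℝ (Fin 3) → ℝ)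
    (i j : Fin 3) : EuclideanSpace ℝ (Fin 3) → ℝ :=
  fun x => ∑ k, ∑ l, ∑ m, ∑ n, lc i k l * lc j m n * pd3 k (pd3 m (F l n)) x

/-- The Laplacian `Δf = ∂_m ∂_m f` on `ℝ³`. -/
noncomputable def lap3 (f : EuclideanSpace ℝ (Fin 3) → ℝ) :
    EuclideanSpace ℝ (Fin 3) → ℝ :=
  fun x => ∑ m, pd3 m (pd3 m f) x

section Aux

variable {U : Set (EuclideanSpace ℝ (Fin 3))} {f g : EuclideanSpace ℝ (Fin 3) → ℝ}
  {x : EuclideanSpace ℝ (Fin 3)}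

lemma aux_le1 : (1 : WithTop ℕ∞) ≤ ((⊤ : ℕ∞) : WithTop ℕ∞) := by
  exact_mod_cast (le_top : _ ≤ (⊤:ℕ∞))
lemma aux_le2 : (2 : WithTop ℕ∞) ≤ ((⊤ : ℕ∞) : WithTop ℕ∞) := by
  have : ((2:ℕ∞) : WithTop ℕ∞) ≤ ((⊤:ℕ∞) : WithTop ℕ∞) := WithTop.coe_le_coe.mpr le_top
  simpa using this
lemma aux_le3 : ((⊤ : ℕ∞) : WithTop ℕ∞) + 1 ≤ ((⊤ : ℕ∞) : WithTop ℕ∞) := by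
  exact_mod_cast (le_top : _ ≤ (⊤:ℕ∞))
lemma aux_le4 : (1 : WithTop ℕ∞) + 1 ≤ ((⊤ : ℕ∞) : WithTop ℕ∞) := by
  have : (1 : WithTop ℕ∞) + 1 = 2 := by norm_num
  rw [this]; exact aux_le2

lemma pd3_smoothOn (hU : IsOpen U) (hf : ContDiffOn ℝ (⊤ : ℕ∞) f U) (i : Fin 3) :
    ContDiffOn ℝ (⊤ : ℕ∞) (pd3 i f) U := by
  have h := hf.fderiv_of_isOpen hU aux_le3
  exact h.clm_apply contDiffOn_const

lemma diffAt_of_smoothOn (hU : IsOpen U) (hf : ContDiffOn ℝ (⊤ : ℕ∞) f U) (hx : x ∈ U) :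
    DifferentiableAt ℝ f x :=
  (hf.contDiffAt (hU.mem_nhds hx)).differentiableAt (by simp)

lemma pd3_congr (hU : IsOpen U) (h : Set.EqOn f g U) (hx : x ∈ U) (i : Fin 3) :
    pd3 i f x = pd3 i g x := by
  unfold pd3
  rw [Filter.EventuallyEq.fderiv_eq (Filter.eventuallyEq_of_mem (hU.mem_nhds hx) h)]

lemma pd3_comm (hU : IsOpen U) (hf : ContDiffOn ℝ (⊤ : ℕ∞) f U) (hx : x ∈ U) (a b : Fin 3) :
    pd3 a (pd3 b f) x = pd3 b (pd3 a f) x := by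
  have hct : ContDiffAt ℝ (⊤ : ℕ∞) f x := hf.contDiffAt (hU.mem_nhds hx)
  have hsymm : IsSymmSndFDerivAt ℝ f x := hct.isSymmSndFDerivAt (by simpa using aux_le2)
  have hd : DifferentiableAt ℝ (fderiv ℝ f) x :=
    (hct.fderiv_right (m := 1) aux_le4).differentiableAt one_ne_zero
  have key : ∀ v w : EuclideanSpace ℝ (Fin 3),
      fderiv ℝ (fun y => fderiv ℝ f y v) x w = fderiv ℝ (fderiv ℝ f) x w v := by
    intro v w
    rw [fderiv_clm_apply hd (differentiableAt_const v)]
    simp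
  show fderiv ℝ (fun y => fderiv ℝ f y _) x _ = fderiv ℝ (fun y => fderiv ℝ f y _) x _
  rw [key, key, hsymm.eq]

lemma pd3_sum_fin {g : Fin 3 → EuclideanSpace ℝ (Fin 3) → ℝ}
    (hg : ∀ k, DifferentiableAt ℝ (g k) x) (i : Fin 3) :
    pd3 i (fun y => ∑ k, g k y) x = ∑ k, pd3 i (g k) x := by
  unfold pd3
  rw [fderiv_fun_sum (fun k _ => hg k)]
  simp

lemma pd3_const_mul (c : ℝ) (hg : DifferentiableAt ℝ g x) (i : Fin 3) :
    pd3 i (fun y => c * g y) x = c * pd3 i g x := by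
  unfold pd3
  rw [fderiv_const_mul hg c]
  simp

lemma pd3_push2 {g : Fin 3 → Fin 3 → EuclideanSpace ℝ (Fin 3) → ℝ}
    (hg : ∀ a b, DifferentiableAt ℝ (g a b) x) (i : Fin 3) :
    pd3 i (fun y => ∑ a, ∑ b, g a b y) x = ∑ a, ∑ b, pd3 i (g a b) x := by
  rw [pd3_sum_fin (fun a => DifferentiableAt.fun_sum fun b _ => hg a b)]
  exact Finset.sum_congr rfl fun a _ => pd3_sum_fin (fun b => hg a b) i

lemma pd3_push4 {g : Fin 3 → Fin 3 → Fin 3 → Fin 3 → EuclideanSpace ℝ (Fin 3) → ℝ}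
    (C : Fin 3 → Fin 3 → Fin 3 → Fin 3 → ℝ)
    (hg : ∀ a b c d, DifferentiableAt ℝ (g a b c d) x) (i : Fin 3) :
    pd3 i (fun y => ∑ a, ∑ b, ∑ c, ∑ d, C a b c d * g a b c d y) x
      = ∑ a, ∑ b, ∑ c, ∑ d, C a b c d * pd3 i (g a b c d) x := by
  have d4 : ∀ a b c d, DifferentiableAt ℝ (fun y => C a b c d * g a b c d y) x :=
    fun a b c d => (hg a b c d).const_mul _
  have d3 : ∀ a b c, DifferentiableAt ℝ (fun y => ∑ d, C a b c d * g a b c d y) x :=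
    fun a b c => DifferentiableAt.fun_sum fun d _ => d4 a b c d
  have d2 : ∀ a b, DifferentiableAt ℝ (fun y => ∑ c, ∑ d, C a b c d * g a b c d y) x :=
    fun a b => DifferentiableAt.fun_sum fun c _ => d3 a b c
  have d1 : ∀ a, DifferentiableAt ℝ (fun y => ∑ b, ∑ c, ∑ d, C a b c d * g a b c d y) x :=
    fun a => DifferentiableAt.fun_sum fun b _ => d2 a b
  rw [pd3_sum_fin d1]
  refine Finset.sum_congr rfl fun a _ => ?_
  rw [pd3_sum_fin (d2 a)]
  refine Finset.sum_congr rfl fun b _ => ?_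
  rw [pd3_sum_fin (d3 a b)]
  refine Finset.sum_congr rfl fun c _ => ?_
  rw [pd3_sum_fin (d4 a b c)]
  exact Finset.sum_congr rfl fun d _ => pd3_const_mul _ (hg a b c d) i

lemma eps3 (X : Fin 3 → Fin 3 → Fin 3 → ℝ) (j : Fin 3) :
    ∑ m, ∑ n, lc j m n * (∑ c, ∑ d, lc n c d * X m c d) = ∑ m, (X m j m - X m m j) := by
  fin_cases j <;> (simp [Fin.sum_univ_three, lc]; ring)

lemma shuffle0 (c : ℝ) (r g : Fin 3 → Fin 3 → ℝ) :
    ∑ m, ∑ n, c * r m n * g m n = c * ∑ m, ∑ n, r m n * g m n := by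
  simp [Finset.mul_sum, mul_assoc]

lemma shuffle1 (p q : Fin 3 → Fin 3 → ℝ) (D : Fin 3 → Fin 3 → Fin 3 → Fin 3 → ℝ) :
    ∑ a, ∑ b, ∑ c, ∑ d, p a b * q c d * D a b c d
      = ∑ a, ∑ b, p a b * (∑ c, ∑ d, q c d * D a b c d) := by
  simp [Finset.mul_sum, mul_assoc]

lemma shuffle2 (r p : Fin 3 → Fin 3 → ℝ) (E : Fin 3 → Fin 3 → Fin 3 → Fin 3 → ℝ) :
    ∑ m, ∑ n, r m n * (∑ a, ∑ b, p a b * E m n a b)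
      = ∑ a, ∑ b, p a b * (∑ m, ∑ n, r m n * E m n a b) := by
  simp only [Fin.sum_univ_three]; ring

set_option maxHeartbeats 1000000 in
lemma ALG2 (D : Fin 3 → Fin 3 → Fin 3 → Fin 3 → Fin 3 → Fin 3 → ℝ) (i j : Fin 3) :
    ∑ k, ∑ l, ∑ m, ∑ n, lc i k l * lc j m n *
        (∑ a, ∑ b, ∑ c, ∑ d, lc l a b * lc n c d * D k m a c b d)
      = ∑ k, ∑ m, (D k m i j k m - D k m i m k j - D k m k j i m + D k m k m i j) := by
  have key : ∀ k l : Fin 3,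
      ∑ m, ∑ n, lc i k l * lc j m n *
          (∑ a, ∑ b, ∑ c, ∑ d, lc l a b * lc n c d * D k m a c b d)
        = lc i k l * (∑ a, ∑ b, lc l a b *
            (∑ m, (D k m a j b m - D k m a m b j))) := by
    intro k l
    rw [shuffle0 (lc i k l) (fun m n => lc j m n)
      (fun m n => ∑ a, ∑ b, ∑ c, ∑ d, lc l a b * lc n c d * D k m a c b d)]
    congr 1
    calc ∑ m, ∑ n, lc j m n * (∑ a, ∑ b, ∑ c, ∑ d, lc l a b * lc n c d * D k m a c b d)
        = ∑ m, ∑ n, lc j m n *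
            (∑ a, ∑ b, lc l a b * (∑ c, ∑ d, lc n c d * D k m a c b d)) := by
          refine Finset.sum_congr rfl fun m _ => Finset.sum_congr rfl fun n _ => ?_
          rw [shuffle1 (fun a b => lc l a b) (fun c d => lc n c d)
            (fun a b c d => D k m a c b d)]
      _ = ∑ a, ∑ b, lc l a b *
            (∑ m, ∑ n, lc j m n * (∑ c, ∑ d, lc n c d * D k m a c b d)) :=
          shuffle2 (fun m n => lc j m n) (fun a b => lc l a b)
            (fun m n a b => ∑ c, ∑ d, lc n c d * D k m a c b d)
      _ = ∑ a, ∑ b, lc l a b * (∑ m, (D k m a j b m - D k m a m b j)) := by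
          refine Finset.sum_congr rfl fun a _ => Finset.sum_congr rfl fun b _ => ?_
          rw [eps3 (fun m c d => D k m a c b d) j]
  calc ∑ k, ∑ l, ∑ m, ∑ n, lc i k l * lc j m n *
          (∑ a, ∑ b, ∑ c, ∑ d, lc l a b * lc n c d * D k m a c b d)
      = ∑ k, ∑ l, lc i k l * (∑ a, ∑ b, lc l a b *
          (∑ m, (D k m a j b m - D k m a m b j))) := by
        exact Finset.sum_congr rfl fun k _ => Finset.sum_congr rfl fun l _ => key k l
    _ = ∑ k, ((∑ m, (D k m i j k m - D k m i m k j))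
          - (∑ m, (D k m k j i m - D k m k m i j))) :=
        eps3 (fun k a b => ∑ m, (D k m a j b m - D k m a m b j)) i
    _ = ∑ k, ∑ m, (D k m i j k m - D k m i m k j - D k m k j i m + D k m k m i j) := by
        refine Finset.sum_congr rfl fun k _ => ?_
        rw [← Finset.sum_sub_distrib]
        exact Finset.sum_congr rfl fun m _ => by ring

end Aux

set_option maxHeartbeats 1000000 in
/-- **Identity (2.5) of the paper:** for a smooth symmetric tensor field `F`,
`inc(inc(F))_ij = ΔΔF_ij + ∂_i∂_j∂_k∂_l F_kl − Δ(∂_j∂_k F_ik) − Δ(∂_i∂_k F_jk)`. -/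
theorem inc_inc_eq (U : Set (EuclideanSpace ℝ (Fin 3))) (hU : IsOpen U)
    (F : Fin 3 → Fin 3 → EuclideanSpace ℝ (Fin 3) → ℝ)
    (hF : ∀ i j, ContDiffOn ℝ (⊤ : ℕ∞) (F i j) U)
    (hsym : ∀ i j, F i j = F j i) :
    ∀ i j, ∀ x ∈ U,
      inc (inc F) i j x
        = lap3 (lap3 (F i j)) x
          + pd3 i (pd3 j (fun y => ∑ k, ∑ l, pd3 k (pd3 l (F k l)) y)) x
          - lap3 (fun y => ∑ k, pd3 j (pd3 k (F i k)) y) x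
          - lap3 (fun y => ∑ k, pd3 i (pd3 k (F j k)) y) x := by
  intro i j x hx
  -- smoothness of derivative chains
  have s1 : ∀ (a : Fin 3) (e f : Fin 3), ContDiffOn ℝ (⊤ : ℕ∞) (pd3 a (F e f)) U :=
    fun a e f => pd3_smoothOn hU (hF e f) a
  have s2 : ∀ (a b : Fin 3) (e f : Fin 3),
      ContDiffOn ℝ (⊤ : ℕ∞) (pd3 a (pd3 b (F e f))) U :=
    fun a b e f => pd3_smoothOn hU (s1 b e f) a
  have s3 : ∀ (a b c : Fin 3) (e f : Fin 3),
      ContDiffOn ℝ (⊤ : ℕ∞) (pd3 a (pd3 b (pd3 c (F e f)))) U :=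
    fun a b c e f => pd3_smoothOn hU (s2 b c e f) a
  -- the point values of fourth derivatives
  set D : Fin 3 → Fin 3 → Fin 3 → Fin 3 → Fin 3 → Fin 3 → ℝ :=
    fun a b c d e f => pd3 a (pd3 b (pd3 c (pd3 d (F e f)))) x with hD
  -- swap lemmas
  have sw12 : ∀ a b c d e f, D a b c d e f = D b a c d e f := fun a b c d e f =>
    pd3_comm hU (s2 c d e f) hx a b
  have sw23 : ∀ a b c d e f, D a b c d e f = D a c b d e f := fun a b c d e f =>
    pd3_congr hU (fun y hy => pd3_comm hU (s1 d e f) hy b c) hx a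
  have sw34 : ∀ a b c d e f, D a b c d e f = D a b d c e f := by
    intro a b c d e f
    have e2 : Set.EqOn (pd3 c (pd3 d (F e f))) (pd3 d (pd3 c (F e f))) U :=
      fun y hy => pd3_comm hU (hF e f) hy c d
    exact pd3_congr hU (fun y hy => pd3_congr hU e2 hy b) hx a
  have hFsw : ∀ a b c d e f, D a b c d e f = D a b c d f e := by
    intro a b c d e f; show pd3 a (pd3 b (pd3 c (pd3 d (F e f)))) x = pd3 a (pd3 b (pd3 c (pd3 d (F f e)))) x; rw [hsym e f]
  -- LHS expansion
  have hL : inc (inc F) i j x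
      = ∑ k, ∑ l, ∑ m, ∑ n, lc i k l * lc j m n *
          (∑ a, ∑ b, ∑ c, ∑ d, lc l a b * lc n c d * D k m a c b d) := by
    show ∑ k, ∑ l, ∑ m, ∑ n, lc i k l * lc j m n * pd3 k (pd3 m (inc F l n)) x = _
    refine Finset.sum_congr rfl fun k _ => Finset.sum_congr rfl fun l _ =>
      Finset.sum_congr rfl fun m _ => Finset.sum_congr rfl fun n _ => ?_
    congr 1
    have e1 : Set.EqOn (pd3 m (inc F l n))
        (fun y => ∑ a, ∑ b, ∑ c, ∑ d, lc l a b * lc n c d *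
          pd3 m (pd3 a (pd3 c (F b d))) y) U := by
      intro y hy
      exact pd3_push4 (fun a b c d => lc l a b * lc n c d)
        (fun a b c d => diffAt_of_smoothOn hU (s2 a c b d) hy) m
    calc pd3 k (pd3 m (inc F l n)) x
        = pd3 k (fun y => ∑ a, ∑ b, ∑ c, ∑ d, lc l a b * lc n c d *
            pd3 m (pd3 a (pd3 c (F b d))) y) x := pd3_congr hU e1 hx k
      _ = ∑ a, ∑ b, ∑ c, ∑ d, lc l a b * lc n c d * D k m a c b d :=
          pd3_push4 (fun a b c d => lc l a b * lc n c d)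
            (fun a b c d => diffAt_of_smoothOn hU (s3 m a c b d) hx) k
  -- RHS expansions
  have hR1 : lap3 (lap3 (F i j)) x = ∑ m, ∑ p, D m m p p i j := by
    show ∑ m, pd3 m (pd3 m (lap3 (F i j))) x = _
    refine Finset.sum_congr rfl fun m _ => ?_
    have e1 : Set.EqOn (pd3 m (lap3 (F i j)))
        (fun y => ∑ p, pd3 m (pd3 p (pd3 p (F i j))) y) U := by
      intro y hy
      exact pd3_sum_fin (fun p => diffAt_of_smoothOn hU (s2 p p i j) hy) m
    calc pd3 m (pd3 m (lap3 (F i j))) x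
        = pd3 m (fun y => ∑ p, pd3 m (pd3 p (pd3 p (F i j))) y) x := pd3_congr hU e1 hx m
      _ = ∑ p, D m m p p i j :=
          pd3_sum_fin (fun p => diffAt_of_smoothOn hU (s3 m p p i j) hx) m
  have hR2 : pd3 i (pd3 j (fun y => ∑ k, ∑ l, pd3 k (pd3 l (F k l)) y)) x
      = ∑ k, ∑ l, D i j k l k l := by
    have e1 : Set.EqOn (pd3 j (fun y => ∑ k, ∑ l, pd3 k (pd3 l (F k l)) y))
        (fun y => ∑ k, ∑ l, pd3 j (pd3 k (pd3 l (F k l))) y) U := by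
      intro y hy
      exact pd3_push2 (fun k l => diffAt_of_smoothOn hU (s2 k l k l) hy) j
    calc pd3 i (pd3 j (fun y => ∑ k, ∑ l, pd3 k (pd3 l (F k l)) y)) x
        = pd3 i (fun y => ∑ k, ∑ l, pd3 j (pd3 k (pd3 l (F k l))) y) x :=
          pd3_congr hU e1 hx i
      _ = ∑ k, ∑ l, D i j k l k l :=
          pd3_push2 (fun k l => diffAt_of_smoothOn hU (s3 j k l k l) hx) i
  have hR3 : lap3 (fun y => ∑ k, pd3 j (pd3 k (F i k)) y) x = ∑ m, ∑ k, D m m j k i k := by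
    show ∑ m, pd3 m (pd3 m (fun y => ∑ k, pd3 j (pd3 k (F i k)) y)) x = _
    refine Finset.sum_congr rfl fun m _ => ?_
    have e1 : Set.EqOn (pd3 m (fun y => ∑ k, pd3 j (pd3 k (F i k)) y))
        (fun y => ∑ k, pd3 m (pd3 j (pd3 k (F i k))) y) U := by
      intro y hy
      exact pd3_sum_fin (fun k => diffAt_of_smoothOn hU (s2 j k i k) hy) m
    calc pd3 m (pd3 m (fun y => ∑ k, pd3 j (pd3 k (F i k)) y)) x
        = pd3 m (fun y => ∑ k, pd3 m (pd3 j (pd3 k (F i k))) y) x := pd3_congr hU e1 hx m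
      _ = ∑ k, D m m j k i k :=
          pd3_sum_fin (fun k => diffAt_of_smoothOn hU (s3 m j k i k) hx) m
  have hR4 : lap3 (fun y => ∑ k, pd3 i (pd3 k (F j k)) y) x = ∑ m, ∑ k, D m m i k j k := by
    show ∑ m, pd3 m (pd3 m (fun y => ∑ k, pd3 i (pd3 k (F j k)) y)) x = _
    refine Finset.sum_congr rfl fun m _ => ?_
    have e1 : Set.EqOn (pd3 m (fun y => ∑ k, pd3 i (pd3 k (F j k)) y))
        (fun y => ∑ k, pd3 m (pd3 i (pd3 k (F j k))) y) U := by
      intro y hy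
      exact pd3_sum_fin (fun k => diffAt_of_smoothOn hU (s2 i k j k) hy) m
    calc pd3 m (pd3 m (fun y => ∑ k, pd3 i (pd3 k (F j k)) y)) x
        = pd3 m (fun y => ∑ k, pd3 m (pd3 i (pd3 k (F j k))) y) x := pd3_congr hU e1 hx m
      _ = ∑ k, D m m i k j k :=
          pd3_sum_fin (fun k => diffAt_of_smoothOn hU (s3 m i k j k) hx) m
  rw [hL, hR1, hR2, hR3, hR4, ALG2 D i j]
  -- now pure symmetry bookkeeping
  have S1 : ∑ k, ∑ m, D k m k m i j = ∑ m, ∑ p, D m m p p i j := by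
    refine Finset.sum_congr rfl fun k _ => Finset.sum_congr rfl fun m _ => ?_
    exact sw23 k m k m i j
  have S2 : ∑ k, ∑ m, D k m i j k m = ∑ k, ∑ l, D i j k l k l := by
    refine Finset.sum_congr rfl fun k _ => Finset.sum_congr rfl fun m _ => ?_
    calc D k m i j k m = D k i m j k m := sw23 k m i j k m
      _ = D i k m j k m := sw12 k i m j k m
      _ = D i k j m k m := sw34 i k m j k m
      _ = D i j k m k m := sw23 i k j m k m
  have S3 : ∑ k, ∑ m, D k m k j i m = ∑ m, ∑ k, D m m j k i k := by
    calc ∑ k, ∑ m, D k m k j i m = ∑ k, ∑ m, D k k j m i m := by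
          refine Finset.sum_congr rfl fun k _ => Finset.sum_congr rfl fun m _ => ?_
          calc D k m k j i m = D k k m j i m := sw23 k m k j i m
            _ = D k k j m i m := sw34 k k m j i m
      _ = ∑ m, ∑ k, D m m j k i k := rfl
  have S4 : ∑ k, ∑ m, D k m i m k j = ∑ m, ∑ k, D m m i k j k := by
    calc ∑ k, ∑ m, D k m i m k j = ∑ k, ∑ m, D m m i k j k := by
          refine Finset.sum_congr rfl fun k _ => Finset.sum_congr rfl fun m _ => ?_
          calc D k m i m k j = D k m i m j k := hFsw k m i m k j
            _ = D m k i m j k := sw12 k m i m j k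
            _ = D m k m i j k := sw34 m k i m j k
            _ = D m m k i j k := sw23 m k m i j k
            _ = D m m i k j k := sw34 m m k i j k
      _ = ∑ m, ∑ k, D m m i k j k := Finset.sum_comm
  calc ∑ k, ∑ m, (D k m i j k m - D k m i m k j - D k m k j i m + D k m k m i j)
      = (∑ k, ∑ m, D k m i j k m) - (∑ k, ∑ m, D k m i m k j)
        - (∑ k, ∑ m, D k m k j i m) + (∑ k, ∑ m, D k m k m i j) := by
        simp [Finset.sum_add_distrib, Finset.sum_sub_distrib]
    _ = _ := by rw [S1, S2, S3, S4]; ring
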